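/- For 0 < τ < 1 and symmetric positive definite matrices K̃, K with K = L L^T, the quantity D_τ = tr(-(1/(τ(1-τ))) M^τ + (1/(1-τ)) M + (1/τ) I), where M = L^{-1} K̃ L^{-T}, is nonnegative, and it equals zero if and only if K̃ = K. -/

import Mathlib

open Matrix

/-- Spectral functional calculus for Hermitian real matrices (junk value `0` otherwise). -/
noncomputable def matFun {n : ℕ} (f : ℝ → ℝ) (A : Matrix (Fin n) (Fin n) ℝ) :
    Matrix (Fin n) (Fin n) ℝ :=
  if hA : A.IsHermitian then
    (Matrix.IsHermitian.eigenvectorUnitary hA : Matrix (Fin n) (Fin n) ℝ) *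
      Matrix.diagonal (fun i => f (hA.eigenvalues i)) *
      star (Matrix.IsHermitian.eigenvectorUnitary hA : Matrix (Fin n) (Fin n) ℝ)
  else 0

/-- Matrix logarithm of a symmetric positive definite matrix, via spectral calculus. -/
noncomputable def mlog {n : ℕ} (A : Matrix (Fin n) (Fin n) ℝ) : Matrix (Fin n) (Fin n) ℝ :=
  matFun Real.log A

/-- Real power of a symmetric positive definite matrix, via spectral calculus. -/
noncomputable def mpow {n : ℕ} (A : Matrix (Fin n) (Fin n) ℝ) (t : ℝ) :
    Matrix (Fin n) (Fin n) ℝ :=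
  matFun (fun x => x ^ t) A

lemma trace_matFun {n : ℕ} (f : ℝ → ℝ) {A : Matrix (Fin n) (Fin n) ℝ} (hA : A.IsHermitian) :
    (matFun f A).trace = ∑ i, f (hA.eigenvalues i) := by
  rw [matFun, dif_pos hA, Matrix.trace_mul_cycle,
    Matrix.mem_unitaryGroup_iff'.mp (Matrix.IsHermitian.eigenvectorUnitary hA).2, one_mul,
    Matrix.trace_diagonal]

lemma trace_eq_sum_eig {n : ℕ} {A : Matrix (Fin n) (Fin n) ℝ} (hA : A.IsHermitian) :
    A.trace = ∑ i, hA.eigenvalues i := by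
  nth_rewrite 1 [hA.spectral_theorem]
  rw [Unitary.conjStarAlgAut_apply, Matrix.trace_mul_cycle,
    Matrix.mem_unitaryGroup_iff'.mp (Matrix.IsHermitian.eigenvectorUnitary hA).2, one_mul,
    Matrix.trace_diagonal]
  simp

lemma posDef_conj {n : ℕ} {A B : Matrix (Fin n) (Fin n) ℝ} (hB : B.PosDef)
    (hA : IsUnit A.det) : (A * B * Aᵀ).PosDef := by
  constructor
  · have h1 : Bᵀ = B := hB.1
    simp [Matrix.IsHermitian, conjTranspose_eq_transpose_of_trivial, transpose_mul,
      transpose_transpose, h1, mul_assoc]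
  · have h := hB.mul_mul_conjTranspose_same (B := A)
      (Matrix.vecMul_injective_iff_isUnit.mpr ((Matrix.isUnit_iff_isUnit_det _).mpr hA))
    rw [conjTranspose_eq_transpose_of_trivial] at h
    exact h.2

theorem stmt_2 {n : ℕ} (τ : ℝ) (hτ0 : 0 < τ) (hτ1 : τ < 1)
    (K Kt L : Matrix (Fin n) (Fin n) ℝ)
    (hK : K.PosDef) (hKt : Kt.PosDef) (hL : K = L * Lᵀ) (hLu : IsUnit L.det) :
    0 ≤ (-((1 / (τ * (1 - τ))) • mpow (L⁻¹ * Kt * Lᵀ⁻¹) τ) +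
          (1 / (1 - τ)) • (L⁻¹ * Kt * Lᵀ⁻¹) + (1 / τ) • (1 : Matrix (Fin n) (Fin n) ℝ)).trace ∧
    ((-((1 / (τ * (1 - τ))) • mpow (L⁻¹ * Kt * Lᵀ⁻¹) τ) +
          (1 / (1 - τ)) • (L⁻¹ * Kt * Lᵀ⁻¹) + (1 / τ) • (1 : Matrix (Fin n) (Fin n) ℝ)).trace = 0
      ↔ Kt = K) := by
  have hτ1' : 0 < 1 - τ := by linarith
  have hc : 0 < τ * (1 - τ) := mul_pos hτ0 hτ1'
  set M : Matrix (Fin n) (Fin n) ℝ := L⁻¹ * Kt * Lᵀ⁻¹ with hMdef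
  have hLT : IsUnit Lᵀ.det := by rwa [Matrix.det_transpose]
  have hMeq : M = L⁻¹ * Kt * (L⁻¹)ᵀ := by rw [hMdef, Matrix.transpose_nonsing_inv]
  have hM : M.PosDef := hMeq ▸ posDef_conj hKt (Matrix.isUnit_nonsing_inv_det L hLu)
  have hH : M.IsHermitian := hM.1
  have hpos : ∀ i, 0 < hH.eigenvalues i := fun i => hM.eigenvalues_pos i
  have htr : (-((1 / (τ * (1 - τ))) • mpow M τ) + (1 / (1 - τ)) • M
      + (1 / τ) • (1 : Matrix (Fin n) (Fin n) ℝ)).trace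
      = ∑ i, (-(1 / (τ * (1 - τ))) * hH.eigenvalues i ^ τ
          + (1 / (1 - τ)) * hH.eigenvalues i + 1 / τ) := by
    rw [Matrix.trace_add, Matrix.trace_add, Matrix.trace_neg, Matrix.trace_smul,
      Matrix.trace_smul, Matrix.trace_smul, mpow, trace_matFun _ hH, trace_eq_sum_eig hH,
      Matrix.trace_one]
    simp only [smul_eq_mul, Finset.sum_add_distrib, Finset.sum_const, Finset.card_univ,
      Fintype.card_fin, nsmul_eq_mul, ← Finset.mul_sum, neg_mul]
    rw [Finset.sum_neg_distrib, ← Finset.mul_sum]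
    ring
  have hterm : ∀ x : ℝ, 0 < x →
      (0 ≤ -(1 / (τ * (1 - τ))) * x ^ τ + (1 / (1 - τ)) * x + 1 / τ
        ∧ ((-(1 / (τ * (1 - τ))) * x ^ τ + (1 / (1 - τ)) * x + 1 / τ = 0) ↔ x = 1)) := by
    intro x hx
    have hstrict : x ≠ 1 → x ^ τ < τ * x + (1 - τ) := by
      intro hne
      have h := rpow_one_add_lt_one_add_mul_self (s := x - 1) (by linarith)
        (by intro h; exact hne (by linarith)) hτ0 hτ1
      have hx1 : (1 : ℝ) + (x - 1) = x := by ring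
      rw [hx1] at h
      linarith
    have hle : x ^ τ ≤ τ * x + (1 - τ) := by
      rcases eq_or_ne x 1 with rfl | hne
      · rw [Real.one_rpow]; linarith
      · exact (hstrict hne).le
    have heq : -(1 / (τ * (1 - τ))) * x ^ τ + (1 / (1 - τ)) * x + 1 / τ
        = ((τ * x + (1 - τ)) - x ^ τ) / (τ * (1 - τ)) := by
      field_simp
      ring
    rw [heq]
    constructor
    · exact div_nonneg (by linarith) hc.le
    · rw [div_eq_zero_iff]
      constructor
      · rintro (h | h)
        · by_contra hne
          have := hstrict hne
          linarith
        · exact absurd h hc.ne'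
      · rintro rfl
        left
        rw [Real.one_rpow]
        ring
  refine ⟨by rw [htr]; exact Finset.sum_nonneg fun i _ => (hterm _ (hpos i)).1, ?_, ?_⟩
  · intro h0
    rw [htr] at h0
    have hall := (Finset.sum_eq_zero_iff_of_nonneg
      (fun i _ => (hterm _ (hpos i)).1)).mp h0
    have hl1 : ∀ i, hH.eigenvalues i = 1 :=
      fun i => (hterm _ (hpos i)).2.mp (hall i (Finset.mem_univ i))
    have hdiag : Matrix.diagonal (RCLike.ofReal ∘ hH.eigenvalues)
        = (1 : Matrix (Fin n) (Fin n) ℝ) := by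
      have : (RCLike.ofReal ∘ hH.eigenvalues : Fin n → ℝ) = fun _ => 1 :=
        funext fun i => by simp [hl1 i]
      rw [this, Matrix.diagonal_one]
    have hM1 : M = 1 := by
      rw [hH.spectral_theorem, hdiag, Unitary.conjStarAlgAut_apply, mul_one,
        Matrix.mem_unitaryGroup_iff.mp (Matrix.IsHermitian.eigenvectorUnitary hH).2]
    have hKey : L * M * Lᵀ = Kt := by
      rw [hMdef, mul_assoc L⁻¹ Kt Lᵀ⁻¹, Matrix.mul_nonsing_inv_cancel_left L _ hLu,
        mul_assoc, Matrix.nonsing_inv_mul Lᵀ hLT, mul_one]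
    rw [← hKey, hM1, mul_one]
    exact hL.symm
  · intro hKtK
    have hM1 : M = 1 := by
      rw [hMdef, hKtK, hL, Matrix.nonsing_inv_mul_cancel_left L Lᵀ hLu,
        Matrix.mul_nonsing_inv Lᵀ hLT]
    have hdiag : Matrix.diagonal (RCLike.ofReal ∘ hH.eigenvalues)
        = (1 : Matrix (Fin n) (Fin n) ℝ) := by
      calc Matrix.diagonal (RCLike.ofReal ∘ hH.eigenvalues)
          = star (Matrix.IsHermitian.eigenvectorUnitary hH : Matrix (Fin n) (Fin n) ℝ) * M *
            (Matrix.IsHermitian.eigenvectorUnitary hH : Matrix (Fin n) (Fin n) ℝ) :=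
            (by rw [← hH.conjStarAlgAut_star_eigenvectorUnitary, Unitary.conjStarAlgAut_apply]
                simp only [Unitary.coe_star, star_star])
        _ = star (Matrix.IsHermitian.eigenvectorUnitary hH : Matrix (Fin n) (Fin n) ℝ) *
            (Matrix.IsHermitian.eigenvectorUnitary hH : Matrix (Fin n) (Fin n) ℝ) := by
            have h2 := congrArg (fun X : Matrix (Fin n) (Fin n) ℝ =>
              star (Matrix.IsHermitian.eigenvectorUnitary hH : Matrix (Fin n) (Fin n) ℝ) * X *
              (Matrix.IsHermitian.eigenvectorUnitary hH : Matrix (Fin n) (Fin n) ℝ)) hM1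
            simpa [mul_one] using h2
        _ = 1 := Matrix.mem_unitaryGroup_iff'.mp
            (Matrix.IsHermitian.eigenvectorUnitary hH).2
    have hl1 : ∀ i, hH.eigenvalues i = 1 := by
      intro i
      have := congrFun (congrFun hdiag i) i
      simpa using this
    rw [htr]
    apply Finset.sum_eq_zero
    intro i _
    exact (hterm _ (hpos i)).2.mpr (hl1 i)
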